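/- Let T : M_n → M_n be a positive linear map that is trace preserving (or, alternatively, unital, i.e. T(I) = I). If λ ∈ ℂ with |λ| = 1 is an eigenvalue of T, then ker(T − λI)² = ker(T − λI); that is, the geometric multiplicity of λ equals its algebraic multiplicity and all Jordan blocks of T for λ are one-dimensional. -/

import Mathlib

open Matrix
open scoped ComplexOrder

noncomputable section

/-- The algebra of `n × n` complex matrices. -/
abbrev Mn (n : ℕ) : Type := Matrix (Fin n) (Fin n) ℂ

/-- The map `X ↦ Q X Q`. -/
def sandwich {n : ℕ} (Q : Mn n) : Module.End ℂ (Mn n) :=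
  (LinearMap.mulLeft ℂ Q).comp (LinearMap.mulRight ℂ Q)

/-- The sum of the two components of a pair. -/
def sumPair (n : ℕ) : (Mn n × Mn n) →ₗ[ℂ] Mn n :=
  LinearMap.fst ℂ (Mn n) (Mn n) + LinearMap.snd ℂ (Mn n) (Mn n)

/-- The QMC `Λ_{T,V}` induced by the channel `T` and the subspace `V` (with orthogonal
projection `P` onto `V` and `Q = I − P`):
`Λ(X₁,X₂) = ((I−ℚ)(T(X₁+X₂)), ℚ(T(X₁+X₂)))` where `ℚ(Y) = QYQ`. -/
def Lam {n : ℕ} (T : Module.End ℂ (Mn n)) (Q : Mn n) : Module.End ℂ (Mn n × Mn n) :=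
  LinearMap.prod
    (((1 : Module.End ℂ (Mn n)) - sandwich Q) ∘ₗ (T ∘ₗ sumPair n))
    ((sandwich Q) ∘ₗ (T ∘ₗ sumPair n))

/-- `ℙ₁(X₁,X₂) = (X₁,0)`. -/
def proj1 (n : ℕ) : Module.End ℂ (Mn n × Mn n) :=
  (LinearMap.inl ℂ (Mn n) (Mn n)).comp (LinearMap.fst ℂ (Mn n) (Mn n))

/-- `ℙ₂(X₁,X₂) = (0,X₂)`. -/
def proj2 (n : ℕ) : Module.End ℂ (Mn n × Mn n) :=
  (LinearMap.inr ℂ (Mn n) (Mn n)).comp (LinearMap.snd ℂ (Mn n) (Mn n))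

/-- The block-diagonal part `S_d = diag(S₁₁,S₂₂)` of a map on `M_n ⊕ M_n`. -/
def diagPart {n : ℕ} (S : Module.End ℂ (Mn n × Mn n)) : Module.End ℂ (Mn n × Mn n) :=
  proj1 n * S * proj1 n + proj2 n * S * proj2 n

/-- The map `E(X₁,X₂) = (X₁+X₂, X₁+X₂)`. -/
def Emap (n : ℕ) : Module.End ℂ (Mn n × Mn n) :=
  LinearMap.prod (sumPair n) (sumPair n)

/-- The map `Θ_W(X₁,X₂) = Tr(X₁+X₂)·W`. -/
def Theta {n : ℕ} (W : Mn n × Mn n) : Module.End ℂ (Mn n × Mn n) :=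
  ((Matrix.traceLinearMap (Fin n) ℂ ℂ) ∘ₗ sumPair n).smulRight W

/-- The mean hitting time `τ(ρ → V) = Σ_{r ≥ 1} r·Tr(ℙT(ℚT)^{r−1} ρ)`. -/
def tau {n : ℕ} (T : Module.End ℂ (Mn n)) (P Q : Mn n) (ρ : Mn n) : ℂ :=
  ∑' r : ℕ, ((r : ℂ) + 1) * ((sandwich P * T * (sandwich Q * T) ^ r) ρ).trace

/-- The pure state `ρ_φ = |φ⟩⟨φ|`. -/
def rhoOf {n : ℕ} (φ : Fin n → ℂ) : Mn n := Matrix.vecMulVec φ (star φ)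

/-- A positive map on `M_n`. -/
def IsPosMap {n : ℕ} (T : Module.End ℂ (Mn n)) : Prop :=
  ∀ X : Mn n, X.PosSemidef → (T X).PosSemidef

/-- A trace-preserving map on `M_n`. -/
def IsTracePreserving {n : ℕ} (T : Module.End ℂ (Mn n)) : Prop :=
  ∀ X : Mn n, (T X).trace = X.trace

/-- A quantum channel: a completely positive trace-preserving map, given by a Kraus
decomposition `T(X) = Σᵢ Vᵢ X Vᵢ*` with `Σᵢ Vᵢ* Vᵢ = I`. -/
def IsChannel {n : ℕ} (T : Module.End ℂ (Mn n)) : Prop :=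
  ∃ (k : ℕ) (V : Fin k → Mn n),
    (∀ X : Mn n, T X = ∑ i, V i * X * (V i)ᴴ) ∧ (∑ i, (V i)ᴴ * V i = 1)

/-- Irreducibility of a positive map on `M_n`: the only orthogonal projections `P` with
`T(P M_n P) ⊆ P M_n P` are `P = 0` and `P = I`. -/
def IsIrreducibleMap {n : ℕ} (T : Module.End ℂ (Mn n)) : Prop :=
  ∀ P : Mn n, P.IsHermitian → P * P = P →
    (∀ X : Mn n, ∃ Y : Mn n, T (P * X * P) = P * Y * P) → P = 0 ∨ P = 1

namespace Stmt7Aux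

variable {n : ℕ}

def cSum (H : Mn n) : ℝ := ∑ i, ∑ j, ‖H i j‖

lemma cSum_nonneg (H : Mn n) : 0 ≤ cSum H :=
  Finset.sum_nonneg fun _ _ => Finset.sum_nonneg fun _ _ => norm_nonneg _

lemma cSum_neg (H : Mn n) : cSum (-H) = cSum H := by simp [cSum]

lemma abs_diag_sum_le (H : Mn n) : ∑ i, ‖H i i‖ ≤ cSum H :=
  Finset.sum_le_sum fun i _ =>
    Finset.single_le_sum (fun j _ => norm_nonneg (H i j)) (Finset.mem_univ i)

lemma quad_rep (M : Mn n) (x : Fin n → ℂ) :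
    dotProduct (star x) (M *ᵥ x) = ∑ i, ∑ j, star (x i) * M i j * x j := by
  simp [dotProduct, mulVec, Finset.mul_sum, mul_assoc]

lemma quad_star (M : Mn n) (hM : M.IsHermitian) (x : Fin n → ℂ) :
    star (dotProduct (star x) (M *ᵥ x)) = dotProduct (star x) (M *ᵥ x) := by
  rw [quad_rep]
  calc star (∑ i, ∑ j, star (x i) * M i j * x j)
      = ∑ i, ∑ j, star (x j) * M j i * x i := by
        rw [star_sum]
        refine Finset.sum_congr rfl fun i _ => ?_
        rw [star_sum]
        refine Finset.sum_congr rfl fun j _ => ?_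
        rw [star_mul', star_mul', star_star, hM.apply j i]
        ring
    _ = ∑ j, ∑ i, star (x j) * M j i * x i := Finset.sum_comm

lemma quad_abs_le (M : Mn n) (x : Fin n → ℂ) :
    ‖∑ i, ∑ j, star (x i) * M i j * x j‖
      ≤ cSum M * ∑ k, ‖x k‖ ^ 2 := by
  calc ‖∑ i, ∑ j, star (x i) * M i j * x j‖
      ≤ ∑ i, ∑ j, ‖star (x i) * M i j * x j‖ :=
        (norm_sum_le _ _).trans
          (Finset.sum_le_sum fun i _ => norm_sum_le _ _)
    _ ≤ ∑ i, ∑ j, ‖M i j‖ * ∑ k, ‖x k‖ ^ 2 := by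
        refine Finset.sum_le_sum fun i _ => Finset.sum_le_sum fun j _ => ?_
        simp only [norm_mul, RCLike.star_def, Complex.norm_conj]
        have h1 : ‖x i‖ ^ 2 ≤ ∑ k, ‖x k‖ ^ 2 :=
          Finset.single_le_sum (f := fun k => ‖x k‖ ^ 2) (fun k _ => sq_nonneg _) (Finset.mem_univ i)
        have h2 : ‖x j‖ ^ 2 ≤ ∑ k, ‖x k‖ ^ 2 :=
          Finset.single_le_sum (f := fun k => ‖x k‖ ^ 2) (fun k _ => sq_nonneg _) (Finset.mem_univ j)
        have ha := norm_nonneg (x i)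
        have hb := norm_nonneg (x j)
        have hm := norm_nonneg (M i j)
        nlinarith [sq_nonneg (‖x i‖ - ‖x j‖)]
    _ = cSum M * ∑ k, ‖x k‖ ^ 2 := by
        rw [cSum, Finset.sum_mul]
        exact Finset.sum_congr rfl fun i _ => (Finset.sum_mul _ _ _).symm

lemma norm_sum_sq (x : Fin n → ℂ) :
    dotProduct (star x) x = ((∑ k, ‖x k‖ ^ 2 : ℝ) : ℂ) := by
  push_cast
  simp only [dotProduct, Pi.star_apply, RCLike.star_def]
  refine Finset.sum_congr rfl fun k _ => ?_
  rw [← Complex.normSq_eq_conj_mul_self, ← Complex.sq_norm]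
  norm_cast

lemma shifted_psd (H : Mn n) (hH : H.IsHermitian) :
    (((cSum H : ℝ) : ℂ) • 1 + H).PosSemidef := by
  set c := cSum H with hc
  have hherm : (((c : ℝ) : ℂ) • 1 + H).IsHermitian := by
    refine Matrix.IsHermitian.add ?_ hH
    rw [Matrix.IsHermitian, Matrix.conjTranspose_smul, Matrix.isHermitian_one.eq,
      Complex.star_def, Complex.conj_ofReal]
  refine Matrix.PosSemidef.of_dotProduct_mulVec_nonneg hherm fun x => ?_
  have hrw : dotProduct (star x) ((((c : ℝ) : ℂ) • 1 + H) *ᵥ x)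
      = ((c : ℝ) : ℂ) * dotProduct (star x) x + dotProduct (star x) (H *ᵥ x) := by
    rw [Matrix.add_mulVec, Matrix.smul_mulVec, Matrix.one_mulVec,
      dotProduct_add, dotProduct_smul, smul_eq_mul]
  set S : ℝ := ∑ k, ‖x k‖ ^ 2 with hS
  have hq : ‖dotProduct (star x) (H *ᵥ x)‖ ≤ c * S := by
    rw [quad_rep]; exact quad_abs_le H x
  have him : (dotProduct (star x) (H *ᵥ x)).im = 0 := by
    have := quad_star H hH x
    rw [← Complex.conj_eq_iff_im]
    exact this
  rw [Complex.nonneg_iff]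
  constructor
  · rw [hrw, norm_sum_sq]
    have h1 : (dotProduct (star x) (H *ᵥ x)).re ≥ -(c * S) := by
      have := Complex.abs_re_le_norm (dotProduct (star x) (H *ᵥ x))
      have h2 := hq
      cases abs_le.mp this with
      | intro hl hr => linarith [hq]
    have hS0 : 0 ≤ S := Finset.sum_nonneg fun k _ => sq_nonneg _
    simp only [Complex.add_re, Complex.mul_re, Complex.ofReal_re, Complex.ofReal_im,
      zero_mul, sub_zero]
    nlinarith [h1]
  · rw [hrw, norm_sum_sq]
    simp only [Complex.add_im, Complex.mul_im, Complex.ofReal_re, Complex.ofReal_im,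
      zero_mul, mul_zero, add_zero, zero_add, him]

lemma psd_diag_re_nonneg {A : Mn n} (hA : A.PosSemidef) (i : Fin n) : 0 ≤ (A i i).re := by
  have h := hA.dotProduct_mulVec_nonneg (Pi.single i 1)
  rw [Complex.nonneg_iff] at h
  have he : dotProduct (star (Pi.single i 1)) (A *ᵥ Pi.single i 1) = A i i := by
    simp [mulVec_single, dotProduct, Pi.single_apply, apply_ite]
  rw [he] at h
  exact h.1

lemma diag_re_le_trace_re {A : Mn n} (hA : A.PosSemidef) (i : Fin n) :
    (A i i).re ≤ A.trace.re := by
  rw [Matrix.trace, Complex.re_sum]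
  exact Finset.single_le_sum (f := fun k => (A k k).re)
    (fun k _ => psd_diag_re_nonneg hA k) (Finset.mem_univ i)

lemma psd_trace_re_nonneg {A : Mn n} (hA : A.PosSemidef) : 0 ≤ A.trace.re := by
  rw [Matrix.trace, Complex.re_sum]
  exact Finset.sum_nonneg fun k _ => psd_diag_re_nonneg hA k

lemma psd_entry_abs_le_trace {A : Mn n} (hA : A.PosSemidef) (i j : Fin n) :
    ‖A i j‖ ≤ A.trace.re := by
  have hti := diag_re_le_trace_re hA i
  have htj := diag_re_le_trace_re hA j
  obtain ⟨B, hB⟩ : ∃ B : Mn n, A = Bᴴ * B := by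
    open scoped MatrixOrder Matrix.Norms.L2Operator in
    obtain ⟨B, rfl⟩ := CStarAlgebra.nonneg_iff_eq_star_mul_self.mp hA.nonneg
    exact ⟨B, rfl⟩
  have hdiag : ∀ l : Fin n, ((Bᴴ * B) l l).re = ∑ k, ‖B k l‖ ^ 2 := by
    intro l
    rw [Matrix.mul_apply, Complex.re_sum]
    refine Finset.sum_congr rfl fun k _ => ?_
    rw [Matrix.conjTranspose_apply]
    rw [show (star (B k l) * B k l).re = ((star (B k l) * B k l : ℂ)).re from rfl]
    have : (star (B k l) * B k l : ℂ) = ((‖B k l‖ ^ 2 : ℝ) : ℂ) := by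
      rw [Complex.sq_norm, Complex.normSq_eq_conj_mul_self, RCLike.star_def]
    rw [this, Complex.ofReal_re]
  have hbound : ‖A i j‖ ≤ ((A i i).re + (A j j).re) / 2 := by
    rw [hB, Matrix.mul_apply]
    calc ‖∑ k, (Bᴴ) i k * B k j‖
        ≤ ∑ k, ‖(Bᴴ) i k * B k j‖ := norm_sum_le _ _
      _ ≤ ∑ k, (‖B k i‖ ^ 2 + ‖B k j‖ ^ 2) / 2 := by
          refine Finset.sum_le_sum fun k _ => ?_
          rw [norm_mul, Matrix.conjTranspose_apply]
          rw [show ‖star (B k i)‖ = ‖B k i‖ by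
            simp [RCLike.star_def]]
          nlinarith [sq_nonneg (‖B k i‖ - ‖B k j‖),
            norm_nonneg (B k i), norm_nonneg (B k j)]
      _ = (((Bᴴ * B) i i).re + ((Bᴴ * B) j j).re) / 2 := by
          rw [hdiag i, hdiag j, ← Finset.sum_add_distrib, ← Finset.sum_div]
  linarith



lemma herm_entry_bound {n : ℕ} (S : Module.End ℂ (Mn n)) (hS : IsPosMap S)
    (hS2 : IsTracePreserving S ∨ S 1 = 1) (H : Mn n) (hH : H.IsHermitian) (i j : Fin n) :
    ‖(S H) i j‖ ≤ 3 * (n + 1) * cSum H := by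
  set c := cSum H with hc
  have hc0 : 0 ≤ c := cSum_nonneg H
  have hA : (((c : ℝ) : ℂ) • 1 + H).PosSemidef := shifted_psd H hH
  have hA' : (((c : ℝ) : ℂ) • 1 + -H).PosSemidef := by
    have h := shifted_psd (-H) hH.neg
    rwa [cSum_neg] at h
  have hSA := hS _ hA
  have hSA' := hS _ hA'
  have hS1 : (S 1).PosSemidef := hS 1 Matrix.PosSemidef.one
  have hdecomp : S H = S (((c : ℝ) : ℂ) • 1 + H) - ((c : ℝ) : ℂ) • S 1 := by
    rw [map_add, _root_.map_smul]; abel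
  -- trace of S 1
  have htr1 : (S 1).trace.re ≤ (n : ℝ) := by
    rcases hS2 with h | h
    · rw [h 1, Matrix.trace_one]
      simp
    · rw [h, Matrix.trace_one]
      simp
  -- trace of S ((c:ℂ)•1 + H)
  have htrH : H.trace.re ≤ c := by
    calc H.trace.re ≤ ∑ i, ‖H i i‖ := by
          rw [Matrix.trace, Complex.re_sum]
          exact Finset.sum_le_sum fun i _ => Complex.re_le_norm (H i i)
      _ ≤ c := abs_diag_sum_le H
  have htrA : (S (((c : ℝ) : ℂ) • 1 + H)).trace.re ≤ 2 * c * n + c := by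
    rcases hS2 with h | h
    · rw [h]
      rw [Matrix.trace_add, Matrix.trace_smul, Matrix.trace_one]
      simp only [Complex.add_re, smul_eq_mul, Complex.mul_re, Complex.ofReal_re,
        Complex.ofReal_im, Complex.natCast_re, Complex.natCast_im, Fintype.card_fin,
        zero_mul, sub_zero]
      nlinarith [Nat.cast_nonneg (α := ℝ) n]
    · have heq : ((c : ℝ) : ℂ) • (1 : Mn n) + -H
          = ((2 * c : ℝ) : ℂ) • (1 : Mn n) - (((c : ℝ) : ℂ) • 1 + H) := by
        push_cast
        module
      have hkey : S (((c : ℝ) : ℂ) • 1 + -H)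
          = ((2 * c : ℝ) : ℂ) • (1 : Mn n) - S (((c : ℝ) : ℂ) • 1 + H) := by
        rw [heq, map_sub, _root_.map_smul, h]
      have h0 := psd_trace_re_nonneg hSA'
      rw [hkey, Matrix.trace_sub, Matrix.trace_smul, Matrix.trace_one] at h0
      simp only [Complex.sub_re, smul_eq_mul, Complex.mul_re, Complex.ofReal_re,
        Complex.ofReal_im, Complex.natCast_re, Complex.natCast_im, Fintype.card_fin,
        zero_mul, sub_zero] at h0
      linarith
  -- entrywise bound
  have hentry : (S H) i j = (S (((c : ℝ) : ℂ) • 1 + H)) i j - ((c : ℝ) : ℂ) * (S 1) i j := by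
    rw [hdecomp, Matrix.sub_apply, Matrix.smul_apply, smul_eq_mul]
  rw [hentry]
  have e1 := psd_entry_abs_le_trace hSA i j
  have e2 := psd_entry_abs_le_trace hS1 i j
  calc ‖S (((c : ℝ) : ℂ) • 1 + H) i j - ((c : ℝ) : ℂ) * (S 1) i j‖
      ≤ ‖S (((c : ℝ) : ℂ) • 1 + H) i j‖
          + ‖((c : ℝ) : ℂ) * (S 1) i j‖ := norm_sub_le _ _
    _ ≤ (2 * c * n + c) + c * n := by
        rw [norm_mul, Complex.norm_of_nonneg hc0]
        have : ‖(S 1) i j‖ ≤ (n : ℝ) := le_trans e2 htr1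
        nlinarith [norm_nonneg ((S 1) i j), le_trans e1 htrA]
    _ ≤ 3 * (n + 1) * c := by nlinarith [Nat.cast_nonneg (α := ℝ) n]

lemma entry_bound_exists {n : ℕ} (X : Mn n) : ∃ C : ℝ, ∀ S : Module.End ℂ (Mn n),
    IsPosMap S → (IsTracePreserving S ∨ S 1 = 1) → ∀ i j : Fin n,
    ‖(S X) i j‖ ≤ C := by
  set H : Mn n := (2⁻¹ : ℂ) • (X + Xᴴ) with hHdef
  set K : Mn n := (-Complex.I * 2⁻¹) • (X - Xᴴ) with hKdef
  have hHh : H.IsHermitian := by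
    rw [Matrix.IsHermitian, hHdef, Matrix.conjTranspose_smul, Matrix.conjTranspose_add,
      Matrix.conjTranspose_conjTranspose]
    rw [show star (2⁻¹ : ℂ) = (2⁻¹ : ℂ) by simp]
    rw [add_comm Xᴴ X]
  have hKh : K.IsHermitian := by
    rw [Matrix.IsHermitian, hKdef, Matrix.conjTranspose_smul, Matrix.conjTranspose_sub,
      Matrix.conjTranspose_conjTranspose]
    rw [show star (-Complex.I * 2⁻¹) = Complex.I * 2⁻¹ by simp [star_mul']]
    rw [show (Xᴴ - X) = -(X - Xᴴ) by abel]
    rw [smul_neg, ← neg_smul]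
    congr 1
    ring
  have hX : X = H + Complex.I • K := by
    rw [hHdef, hKdef, smul_smul]
    rw [show Complex.I * (-Complex.I * 2⁻¹) = (2⁻¹ : ℂ) by
      rw [show Complex.I * (-Complex.I * 2⁻¹) = -(Complex.I * Complex.I) * 2⁻¹ by ring,
        Complex.I_mul_I]; norm_num]
    module
  refine ⟨3 * (n + 1) * cSum H + 3 * (n + 1) * cSum K, fun S hS hS2 i j => ?_⟩
  have h1 := herm_entry_bound S hS hS2 H hHh i j
  have h2 := herm_entry_bound S hS hS2 K hKh i j
  have hSX : (S X) i j = (S H) i j + Complex.I * (S K) i j := by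
    conv_lhs => rw [hX]
    simp [Matrix.add_apply, Matrix.smul_apply]
  rw [hSX]
  calc ‖(S H) i j + Complex.I * (S K) i j‖
      ≤ ‖(S H) i j‖ + ‖Complex.I * (S K) i j‖ :=
        norm_add_le _ _
    _ = ‖(S H) i j‖ + ‖(S K) i j‖ := by
        rw [norm_mul, Complex.norm_I, one_mul]
    _ ≤ _ := add_le_add h1 h2

lemma isPosMap_pow {n : ℕ} (T : Module.End ℂ (Mn n)) (hT : IsPosMap T) :
    ∀ k : ℕ, IsPosMap (T ^ k)
  | 0 => fun X hX => by simpa using hX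
  | (k + 1) => fun X hX => by
      rw [pow_succ, Module.End.mul_apply]
      exact isPosMap_pow T hT k _ (hT X hX)

lemma isTP_pow {n : ℕ} (T : Module.End ℂ (Mn n)) (hT : IsTracePreserving T) :
    ∀ k : ℕ, IsTracePreserving (T ^ k)
  | 0 => fun X => by simp
  | (k + 1) => fun X => by
      rw [pow_succ, Module.End.mul_apply, isTP_pow T hT k, hT]

lemma unital_pow {n : ℕ} (T : Module.End ℂ (Mn n)) (hT : T 1 = 1) :
    ∀ k : ℕ, (T ^ k) 1 = 1
  | 0 => by simp
  | (k + 1) => by rw [pow_succ, Module.End.mul_apply, hT, unital_pow T hT k]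

end Stmt7Aux

open Stmt7Aux

/-- Trivial Jordan blocks for the peripheral spectrum. If `T` is a positive
map on `M_n` which is trace preserving or unital, and `λ` is an eigenvalue of `T` with
`|λ| = 1`, then `ker(T − λI)² = ker(T − λI)`. -/
theorem stmt7 {n : ℕ} (T : Module.End ℂ (Mn n))
    (hTpos : IsPosMap T)
    (hTPorUnital : IsTracePreserving T ∨ T (1 : Mn n) = 1)
    (lam : ℂ) (hlam : ‖lam‖ = 1)
    (heig : Module.End.HasEigenvalue T lam) :
    LinearMap.ker ((T - lam • 1) ^ 2) = LinearMap.ker (T - lam • 1) := by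
  have hdis : ∀ k : ℕ, IsTracePreserving (T ^ k) ∨ (T ^ k) (1 : Mn n) = 1 := by
    rcases hTPorUnital with h | h
    · exact fun k => Or.inl (isTP_pow T h k)
    · exact fun k => Or.inr (unital_pow T h k)
  refine le_antisymm ?_ ?_
  swap
  · intro x hx
    rw [LinearMap.mem_ker] at hx ⊢
    rw [pow_two, Module.End.mul_apply, hx, map_zero]
  intro x hx
  rw [LinearMap.mem_ker] at hx ⊢
  set y := (T - lam • 1) x with hy
  have hy0 : (T - lam • 1) y = 0 := by
    rw [hy, ← Module.End.mul_apply, ← pow_two]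
    exact hx
  have hTy : T y = lam • y := by
    have h := hy0
    rw [LinearMap.sub_apply, LinearMap.smul_apply, Module.End.one_apply, sub_eq_zero] at h
    exact h
  have hTx : T x = lam • x + y := by
    rw [hy, LinearMap.sub_apply, LinearMap.smul_apply, Module.End.one_apply]
    abel
  have hpow : ∀ k : ℕ, (T ^ (k + 1)) x = lam ^ (k + 1) • x + (((k : ℂ) + 1) * lam ^ k) • y := by
    intro k
    induction k with
    | zero => simp [hTx]
    | succ k ih =>
      rw [pow_succ', Module.End.mul_apply, ih, map_add, _root_.map_smul, _root_.map_smul,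
        hTx, hTy]
      simp only [smul_add, smul_smul]
      push_cast
      module
  obtain ⟨C, hC⟩ := entry_bound_exists x
  have hbound : ∀ (k : ℕ) (i j : Fin n),
      ((k : ℝ) + 1) * ‖y i j‖ ≤ C + ‖x i j‖ := by
    intro k i j
    have h1 := hC (T ^ (k + 1)) (isPosMap_pow T hTpos (k + 1)) (hdis (k + 1)) i j
    have h2 : (((k : ℂ) + 1) * lam ^ k) * y i j = ((T ^ (k + 1)) x) i j - lam ^ (k + 1) * x i j := by
      rw [hpow k, Matrix.add_apply, Matrix.smul_apply, Matrix.smul_apply, smul_eq_mul,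
        smul_eq_mul]
      ring
    have h3 : ‖(((k : ℂ) + 1) * lam ^ k) * y i j‖ ≤ C + ‖x i j‖ := by
      rw [h2]
      refine (norm_sub_le _ _).trans (add_le_add h1 ?_)
      rw [norm_mul, norm_pow, hlam, one_pow, one_mul]
    calc ((k : ℝ) + 1) * ‖y i j‖
        = ‖(((k : ℂ) + 1) * lam ^ k) * y i j‖ := by
          rw [norm_mul, norm_mul, norm_pow, hlam, one_pow, mul_one]
          congr 1
          rw [show ((k : ℂ) + 1) = (((k : ℝ) + 1 : ℝ) : ℂ) by push_cast; ring,
            Complex.norm_of_nonneg (by positivity)]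
      _ ≤ _ := h3
  show (T - lam • 1) x = 0
  rw [← hy]
  ext i j
  rw [Matrix.zero_apply]
  by_contra hne
  have hpos : 0 < ‖y i j‖ := norm_pos_iff.mpr hne
  obtain ⟨k, hk⟩ := exists_nat_gt ((C + ‖x i j‖) / ‖y i j‖)
  have hb := hbound k i j
  rw [div_lt_iff₀ hpos] at hk
  nlinarith [hpos]
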